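/- arXiv:2603.26912 — 5 statements merged into one kernel-verified Lean document; each statement's English description precedes it below -/
import Mathlib

section
/- Let f : ℝ → ℂ be 2π-periodic with absolutely summable Fourier coefficients satisfying ∑_{m≠0} |f̂_m| |m| < ∞, and let α be of constant type. Then there exists a constant K such that for all θ ∈ ℝ and all n ≥ 1, |(1/n) ∑_{k=0}^{n−1} f(θ + 2πkα) − f̂_0| ≤ K/n. -/
open Real Complex Finset

-- norm of e^{ix} - 1
lemma norm_exp_I_sub_one (x : ℝ) :
    ‖Complex.exp ((x : ℂ) * Complex.I) - 1‖ = 2 * |Real.sin (x / 2)| := by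
  have h : Complex.exp ((x : ℂ) * Complex.I) - 1
      = ((Real.cos x - 1 : ℝ) : ℂ) + ((Real.sin x : ℝ) : ℂ) * Complex.I := by
    rw [Complex.exp_mul_I]
    push_cast [Complex.ofReal_cos, Complex.ofReal_sin]
    ring
  rw [h, Complex.norm_add_mul_I]
  have hc : Real.cos x = 1 - 2 * Real.sin (x / 2) ^ 2 := by
    have h2 : Real.cos (2 * (x/2)) = Real.cos (x/2) ^ 2 - Real.sin (x/2) ^ 2 := Real.cos_two_mul' (x/2)
    have h3 : 2 * (x/2) = x := by ring
    rw [h3] at h2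
    nlinarith [Real.sin_sq_add_cos_sq (x/2)]
  have : (Real.cos x - 1) ^ 2 + Real.sin x ^ 2 = (2 * |Real.sin (x/2)|) ^ 2 := by
    have hs : Real.sin x = 2 * Real.sin (x/2) * Real.cos (x/2) := by
      rw [← Real.sin_two_mul]; ring_nf
    rw [hc, hs]
    have := Real.sin_sq_add_cos_sq (x / 2)
    have habs : |Real.sin (x/2)| ^ 2 = Real.sin (x/2) ^ 2 := _root_.sq_abs _
    nlinarith
  rw [this, Real.sqrt_sq (by positivity)]

lemma geom_bound (α δ : ℝ) (hδ : 0 < δ)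
    (hα : ∀ p : ℤ, ∀ q : ℕ, 1 ≤ q → |α - (p : ℝ) / (q : ℝ)| ≥ δ / (q : ℝ) ^ 2)
    (m : ℤ) (hm : m ≠ 0) (n : ℕ) :
    ‖∑ k ∈ Finset.range n, Complex.exp (((2 * π * m * α : ℝ) : ℂ) * Complex.I) ^ k‖
      ≤ |(m : ℝ)| / (2 * δ) := by
  have hmabs : (0 : ℝ) < |(m : ℝ)| := by
    simp [abs_pos, Int.cast_ne_zero, hm]
  set p : ℤ := round ((m : ℝ) * α) with hp
  set d : ℝ := |(m : ℝ) * α - p| with hd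
  -- constant type bound
  have hdlow : δ / |(m : ℝ)| ≤ d := by
    have hq1 : 1 ≤ m.natAbs := by omega
    have := hα (m.sign * p) m.natAbs hq1
    have hcast : ((m.natAbs : ℕ) : ℝ) = |(m : ℝ)| := by
      rw [Nat.cast_natAbs]; push_cast; ring
    have hfrac : ((m.sign * p : ℤ) : ℝ) / ((m.natAbs : ℕ) : ℝ) = (p : ℝ) / (m : ℝ) := by
      rw [hcast]
      rcases lt_or_gt_of_ne hm with h | h
      · have : m.sign = -1 := Int.sign_eq_neg_one_of_neg h
        rw [this]
        have : |(m : ℝ)| = -(m : ℝ) := abs_of_neg (by exact_mod_cast h)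
        rw [this]; push_cast; field_simp
      · have : m.sign = 1 := Int.sign_eq_one_of_pos h
        rw [this]
        have : |(m : ℝ)| = (m : ℝ) := abs_of_pos (by exact_mod_cast h)
        rw [this]; push_cast; ring
    rw [hfrac, hcast] at this
    have h1 : δ / |(m : ℝ)| ^ 2 ≤ |α - (p : ℝ) / (m : ℝ)| := this
    have h2 : d = |(m : ℝ)| * |α - (p : ℝ) / (m : ℝ)| := by
      rw [hd, ← abs_mul]
      congr 1
      field_simp
    rw [h2]
    have h3 : δ / |(m : ℝ)| = δ / |(m : ℝ)| ^ 2 * |(m : ℝ)| := by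
      field_simp
    rw [h3]
    calc δ / |(m : ℝ)| ^ 2 * |(m:ℝ)| ≤ |α - (p : ℝ) / (m : ℝ)| * |(m:ℝ)| := by
          gcongr
      _ = |(m : ℝ)| * |α - (p : ℝ) / (m : ℝ)| := by ring
  have hdhalf : d ≤ 1 / 2 := by
    exact abs_sub_round _
  -- sin bound
  have hsin : 2 * δ / |(m : ℝ)| ≤ |Real.sin (π * (m : ℝ) * α)| := by
    have hper : |Real.sin (π * (m : ℝ) * α)| = |Real.sin (((m : ℝ) * α - p) * π)| := by
      have := Real.sin_add_int_mul_pi (((m : ℝ) * α - p) * π) p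
      rw [show ((m:ℝ) * α - p) * π + p * π = π * (m:ℝ) * α by push_cast; ring] at this
      rw [this, abs_mul]
      have hone : |((-1 : ℝ)) ^ p| = 1 := by
        rcases Int.even_or_odd p with h | h
        · rw [h.neg_one_zpow]; norm_num
        · rw [Odd.neg_one_zpow h]; norm_num
      rw [hone, one_mul]
    rw [hper]
    have habs : |Real.sin (((m : ℝ) * α - p) * π)| = |Real.sin (d * π)| := by
      rcases abs_cases ((m : ℝ) * α - p) with ⟨h1, _⟩ | ⟨h1, _⟩
      · rw [hd, h1]
      · rw [hd, h1, show -((m:ℝ)*α - p) * π = -(((m:ℝ)*α - p) * π) by ring,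
          Real.sin_neg, abs_neg]
    rw [habs]
    have hd0 : 0 ≤ d := abs_nonneg _
    have hsle : d * π ≤ π / 2 := by
      nlinarith [Real.pi_pos]
    have := Real.mul_le_sin (by positivity : (0:ℝ) ≤ d * π) hsle
    have hsin0 : 0 ≤ Real.sin (d * π) := Real.sin_nonneg_of_nonneg_of_le_pi
      (by positivity) (by nlinarith [Real.pi_pos])
    rw [_root_.abs_of_nonneg hsin0]
    calc 2 * δ / |(m : ℝ)| ≤ 2 * d := by
          have h5 := (div_le_iff₀ hmabs).mp hdlow
          rw [div_le_iff₀ hmabs]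
          nlinarith
      _ = 2 / π * (d * π) := by
          field_simp
      _ ≤ Real.sin (d * π) := this
  -- norm of r - 1
  set r : ℂ := Complex.exp (((2 * π * (m : ℝ) * α : ℝ) : ℂ) * Complex.I) with hr
  have hnorm : ‖r - 1‖ = 2 * |Real.sin (π * (m : ℝ) * α)| := by
    rw [hr, norm_exp_I_sub_one]
    congr 2
    ring
  have hrnorm1 : ‖r‖ = 1 := Complex.norm_exp_ofReal_mul_I _
  have hlow : 4 * δ / |(m : ℝ)| ≤ ‖r - 1‖ := by
    rw [hnorm]
    calc 4 * δ / |(m : ℝ)| = 2 * (2 * δ / |(m : ℝ)|) := by ring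
      _ ≤ 2 * |Real.sin (π * (m : ℝ) * α)| := by linarith
  have hr1 : r ≠ 1 := by
    intro h
    rw [h, sub_self, norm_zero] at hlow
    have : 0 < 4 * δ / |(m : ℝ)| := by positivity
    linarith
  rw [geom_sum_eq hr1]
  rw [norm_div]
  have hub : ‖r ^ n - 1‖ ≤ 2 := by
    calc ‖r ^ n - 1‖ ≤ ‖r ^ n‖ + ‖(1 : ℂ)‖ := norm_sub_le _ _
      _ = 2 := by rw [norm_pow, hrnorm1]; norm_num
  have hpos : 0 < ‖r - 1‖ := lt_of_lt_of_le (by positivity) hlow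
  calc ‖r ^ n - 1‖ / ‖r - 1‖ ≤ 2 / (4 * δ / |(m : ℝ)|) := by
        apply div_le_div₀ (by norm_num) hub (by positivity) hlow
    _ = |(m : ℝ)| / (2 * δ) := by field_simp; ring


/-- Uniform O(1/n) convergence of Birkhoff averages for functions with Fourier
coefficients satisfying `∑_{m≠0} |f̂_m||m| < ∞`, over a rotation of constant type. -/
theorem birkhoff_average_rate (α : ℝ) (δ : ℝ) (hδ : 0 < δ)
    (hα : ∀ p : ℤ, ∀ q : ℕ, 1 ≤ q → |α - (p : ℝ) / (q : ℝ)| ≥ δ / (q : ℝ) ^ 2)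
    (f : ℝ → ℂ) (c : ℤ → ℂ)
    (hper : Function.Periodic f (2 * π))
    (hsum : Summable (fun m : ℤ => ‖c m‖ * |(m : ℝ)|))
    (hf : ∀ θ : ℝ, f θ = ∑' m : ℤ, c m * Complex.exp ((m : ℂ) * θ * Complex.I)) :
    ∃ K : ℝ, ∀ θ : ℝ, ∀ n : ℕ, 1 ≤ n →
      ‖(1 / (n : ℂ)) * ∑ k ∈ Finset.range n, f (θ + 2 * π * k * α) - c 0‖ ≤ K / n := by
  -- summability of ‖c‖
  have hc_sum : Summable (fun m : ℤ => ‖c m‖) := by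
    apply Summable.of_norm_bounded_eventually (g := fun m => ‖c m‖ * |(m : ℝ)|) hsum
    rw [Filter.eventually_cofinite]
    apply Set.Finite.subset (Set.finite_singleton (0 : ℤ))
    intro m hm
    simp only [Set.mem_setOf_eq, norm_norm] at hm
    by_contra h0
    apply hm
    have hm0 : m ≠ 0 := by simpa using h0
    have h1 : (1 : ℝ) ≤ |(m : ℝ)| := by
      have := Int.one_le_abs hm0
      calc (1:ℝ) = ((1:ℤ):ℝ) := by norm_num
        _ ≤ ((|m| : ℤ) : ℝ) := by exact_mod_cast this
        _ = |(m : ℝ)| := by push_cast; ring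
    calc ‖c m‖ = ‖c m‖ * 1 := by ring
      _ ≤ ‖c m‖ * |(m : ℝ)| := by gcongr
  set C : ℝ := ∑' m : ℤ, ‖c m‖ * |(m : ℝ)| with hC
  refine ⟨C / (2 * δ), fun θ n hn => ?_⟩
  have hn0 : (n : ℂ) ≠ 0 := by
    simp only [ne_eq, Nat.cast_eq_zero]; omega
  have hnR : (0 : ℝ) < n := by exact_mod_cast hn
  -- the term function
  set r : ℤ → ℂ := fun m => Complex.exp (((2 * π * (m : ℝ) * α : ℝ) : ℂ) * Complex.I) with hrdef
  set h : ℤ → ℂ := fun m => c m * Complex.exp ((m : ℂ) * (θ : ℂ) * Complex.I)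
      * ∑ k ∈ Finset.range n, r m ^ k with hhdef
  have hnorm_exp : ∀ (x : ℝ) (m : ℤ), ‖Complex.exp ((m : ℂ) * (x : ℂ) * Complex.I)‖ = 1 := by
    intro x m
    have : ((m : ℂ)) * (x : ℂ) * Complex.I = (((m : ℝ) * x : ℝ) : ℂ) * Complex.I := by
      push_cast; ring
    rw [this, Complex.norm_exp_ofReal_mul_I]
  -- summability of each row
  have hrow : ∀ x : ℝ, Summable (fun m : ℤ => c m * Complex.exp ((m : ℂ) * (x : ℂ) * Complex.I)) := by
    intro x
    apply Summable.of_norm_bounded hc_sum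
    intro m
    rw [norm_mul, hnorm_exp, mul_one]
  -- sum identity
  have hsum_eq : ∑ k ∈ Finset.range n, f (θ + 2 * π * k * α) = ∑' m : ℤ, h m := by
    have step1 : ∀ k ∈ Finset.range n, f (θ + 2 * π * k * α)
        = ∑' m : ℤ, c m * Complex.exp ((m : ℂ) * (θ : ℂ) * Complex.I) * r m ^ k := by
      intro k _
      rw [hf]
      congr 1
      ext m
      have hsplit : (m : ℂ) * ((θ + 2 * π * k * α : ℝ) : ℂ) * Complex.I
          = (m : ℂ) * (θ : ℂ) * Complex.I + (k : ℕ) * ((((2 * π * (m : ℝ) * α : ℝ)) : ℂ) * Complex.I) := by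
        push_cast; ring
      rw [hsplit, Complex.exp_add, hrdef]
      rw [← Complex.exp_nat_mul]
      ring
    rw [Finset.sum_congr rfl step1]
    rw [← Summable.tsum_finsetSum (fun k _ => by
      apply Summable.of_norm_bounded hc_sum
      intro m
      rw [norm_mul, norm_mul, hnorm_exp, mul_one, norm_pow]
      rw [hrdef]
      simp only
      rw [Complex.norm_exp_ofReal_mul_I, one_pow, mul_one])]
    congr 1
    ext m
    rw [hhdef]
    simp only
    rw [Finset.mul_sum]
  -- summability of h
  have hh_sum : Summable h := by
    apply Summable.of_norm_bounded (g := fun m => ‖c m‖ * n) (hc_sum.mul_right _)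
    intro m
    rw [hhdef]
    simp only
    rw [norm_mul, norm_mul, hnorm_exp, mul_one]
    gcongr
    calc ‖∑ k ∈ Finset.range n, r m ^ k‖ ≤ ∑ k ∈ Finset.range n, ‖r m ^ k‖ :=
          norm_sum_le _ _
      _ = ∑ k ∈ Finset.range n, 1 := by
          apply Finset.sum_congr rfl
          intro k _
          rw [norm_pow, hrdef]
          simp only
          rw [Complex.norm_exp_ofReal_mul_I, one_pow]
      _ = n := by simp
  -- split off m = 0
  have hh0 : h 0 = (n : ℂ) * c 0 := by
    rw [hhdef]
    simp only [Int.cast_zero, zero_mul, Complex.exp_zero, mul_one]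
    have : r 0 = 1 := by
      rw [hrdef]; simp
    rw [this]
    simp [Finset.sum_const]
    ring
  have hsplit := Summable.tsum_eq_add_tsum_ite hh_sum 0
  -- main rewriting
  have key : (1 / (n : ℂ)) * ∑ k ∈ Finset.range n, f (θ + 2 * π * k * α) - c 0
      = (1 / (n : ℂ)) * ∑' m : ℤ, if m = 0 then 0 else h m := by
    rw [hsum_eq, hsplit, hh0]
    field_simp
    ring
  rw [key, norm_mul]
  have h1n : ‖(1 / (n : ℂ))‖ = 1 / (n : ℝ) := by
    rw [norm_div, norm_one, Complex.norm_natCast]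
  rw [h1n]
  -- bound the tail tsum
  have hbound : ∀ m : ℤ, ‖if m = 0 then (0:ℂ) else h m‖ ≤ ‖c m‖ * |(m : ℝ)| / (2 * δ) := by
    intro m
    by_cases hm : m = 0
    · simp [hm]
    · simp only [hm, if_false]
      rw [hhdef]
      simp only
      rw [norm_mul, norm_mul, hnorm_exp, mul_one]
      have := geom_bound α δ hδ hα m hm n
      calc ‖c m‖ * ‖∑ k ∈ Finset.range n, r m ^ k‖
          ≤ ‖c m‖ * (|(m : ℝ)| / (2 * δ)) := by gcongr
        _ = ‖c m‖ * |(m : ℝ)| / (2 * δ) := by ring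
  have htail_sum : Summable (fun m : ℤ => ‖if m = 0 then (0:ℂ) else h m‖) := by
    apply Summable.of_nonneg_of_le (fun m => norm_nonneg _) hbound
    exact hsum.div_const _
  calc 1 / (n:ℝ) * ‖∑' m : ℤ, if m = 0 then (0:ℂ) else h m‖
      ≤ 1 / (n:ℝ) * ∑' m : ℤ, ‖if m = 0 then (0:ℂ) else h m‖ := by
        gcongr
        exact norm_tsum_le_tsum_norm htail_sum
    _ ≤ 1 / (n:ℝ) * ∑' m : ℤ, ‖c m‖ * |(m : ℝ)| / (2 * δ) := by
        gcongr
        exact hsum.div_const _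
        exact hbound _
    _ = 1 / (n:ℝ) * (C / (2 * δ)) := by
        rw [tsum_div_const]
    _ = C / (2 * δ) / n := by
        ring
end

section
/- Let α = p/q be rational in lowest terms and F : ℝ × 𝕋 → ℝ continuous. Suppose there exist θ*, θ_* ∈ 𝕋 such that F(r, θ_* + 2πkα) < 0 and F(r, θ* + 2πkα) > 0 for all r ∈ ℝ and all k = 0,…,q−1. Then for every ε > 0 there is no continuous 2π-periodic ψ and λ ∈ ℝ with ψ(θ + 2πα) = ψ(θ) + ε F(ψ(θ), θ) + λ for all θ. -/
open Real

/-- Nonexistence of translated curves for rational rotation number when the forcing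
has a fixed sign along two periodic orbits. -/
theorem no_translated_curve_rational (p : ℤ) (q : ℕ) (hq : 1 ≤ q)
    (hcop : Nat.Coprime p.natAbs q) (α : ℝ) (hα : α = (p : ℝ) / (q : ℝ))
    (F : ℝ → ℝ → ℝ) (hF : Continuous fun rθ : ℝ × ℝ => F rθ.1 rθ.2)
    (hFper : ∀ r θ, F r (θ + 2 * π) = F r θ)
    (θstar θlow : ℝ)
    (hneg : ∀ r : ℝ, ∀ k : ℕ, k < q → F r (θlow + 2 * π * k * α) < 0)
    (hpos : ∀ r : ℝ, ∀ k : ℕ, k < q → F r (θstar + 2 * π * k * α) > 0) :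
    ∀ ε : ℝ, 0 < ε →
      ¬ ∃ (ψ : ℝ → ℝ) (lam : ℝ), Continuous ψ ∧ Function.Periodic ψ (2 * π) ∧
        ∀ θ : ℝ, ψ (θ + 2 * π * α) = ψ θ + ε * F (ψ θ) θ + lam := by
  intro ε hε
  rintro ⟨ψ, lam, hcont, hper, heq⟩
  have hq0 : (q : ℝ) ≠ 0 := by positivity
  -- iterate the equation
  have key : ∀ (θ : ℝ) (n : ℕ), ψ (θ + 2 * π * n * α)
      = ψ θ + ε * ∑ k ∈ Finset.range n, F (ψ (θ + 2 * π * k * α)) (θ + 2 * π * k * α)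
        + n * lam := by
    intro θ n
    induction n with
    | zero => simp
    | succ n ih =>
      have h1 : θ + 2 * π * (n + 1 : ℕ) * α = (θ + 2 * π * n * α) + 2 * π * α := by
        push_cast; ring
      rw [h1, heq, Finset.sum_range_succ, ih]
      push_cast
      ring
  have hqα : 2 * π * (q : ℝ) * α = (p : ℝ) * (2 * π) := by
    rw [hα]; field_simp
  have main : ∀ θ : ℝ,
      ε * ∑ k ∈ Finset.range q, F (ψ (θ + 2 * π * k * α)) (θ + 2 * π * k * α)
        + q * lam = 0 := by
    intro θ
    have := key θ q
    rw [hqα] at this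
    have hp : ψ (θ + (p : ℝ) * (2 * π)) = ψ θ := by
      have := hper.int_mul p θ
      simpa [add_comm] using this
    rw [hp] at this
    linarith
  have hlow := main θlow
  have hhigh := main θstar
  have hsneg : ∑ k ∈ Finset.range q, F (ψ (θlow + 2 * π * k * α)) (θlow + 2 * π * k * α) < 0 := by
    apply Finset.sum_neg
    · intro k hk
      exact hneg _ k (Finset.mem_range.mp hk)
    · exact ⟨0, Finset.mem_range.mpr (by omega)⟩
  have hspos : 0 < ∑ k ∈ Finset.range q, F (ψ (θstar + 2 * π * k * α)) (θstar + 2 * π * k * α) := by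
    apply Finset.sum_pos
    · intro k hk
      exact hpos _ k (Finset.mem_range.mp hk)
    · exact ⟨0, Finset.mem_range.mpr (by omega)⟩
  nlinarith
end

section
/- Let q ≥ 1 be an integer and F(r,θ) = (1 + sin²r) sin(qθ). Then for α = p/q in lowest terms and any ε > 0, the map (r,θ) ↦ (r + εF(r,θ), θ + 2πα) has no translated curve: there is no continuous 2π-periodic ψ and λ ∈ ℝ with ψ(θ+2πα) = ψ(θ) + εF(ψ(θ),θ) + λ. -/
open Real

/-- For `F(r,θ) = (1 + sin²r) sin(qθ)` and rational rotation number `p/q`, the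
quasiperiodically forced map has no translated curve. -/
theorem no_translated_curve_example (q : ℕ) (hq : 1 ≤ q) (p : ℤ)
    (hcop : Nat.Coprime p.natAbs q) (α : ℝ) (hα : α = (p : ℝ) / (q : ℝ))
    (F : ℝ → ℝ → ℝ)
    (hF : ∀ r θ, F r θ = (1 + Real.sin r ^ 2) * Real.sin (q * θ)) :
    ∀ ε : ℝ, 0 < ε →
      ¬ ∃ (ψ : ℝ → ℝ) (lam : ℝ), Continuous ψ ∧ Function.Periodic ψ (2 * π) ∧
        ∀ θ : ℝ, ψ (θ + 2 * π * α) = ψ θ + ε * F (ψ θ) θ + lam := by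
  intro ε hε
  rintro ⟨ψ, lam, hcont, hper, hfun⟩
  have hq0 : (0:ℝ) < (q:ℝ) := by exact_mod_cast hq
  have hqne : (q:ℝ) ≠ 0 := ne_of_gt hq0
  -- iteration formula
  have iter : ∀ θ : ℝ, ∀ n : ℕ, ψ (θ + 2*π*α*n) =
      ψ θ + ∑ k ∈ Finset.range n,
        (ε * F (ψ (θ + 2*π*α*k)) (θ + 2*π*α*k) + lam) := by
    intro θ n
    induction n with
    | zero => simp
    | succ n ih =>
      have h := hfun (θ + 2*π*α*n)
      have harg : θ + 2*π*α*(n+1) = (θ + 2*π*α*n) + 2*π*α := by push_cast; ring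
      rw [Finset.sum_range_succ, ← add_assoc, ← ih]; push_cast; rw [harg, h]; ring
  have key : ∀ θ : ℝ, ε * Real.sin (q*θ) *
      (∑ k ∈ Finset.range q, (1 + Real.sin (ψ (θ + 2*π*α*k)) ^ 2)) + q*lam = 0 := by
    intro θ
    have h1 := iter θ q
    have hperiod : ψ (θ + 2*π*α*q) = ψ θ := by
      have harg : θ + 2*π*α*q = θ + (p:ℤ) * (2*π) := by
        rw [hα]; push_cast; field_simp
      rw [harg]
      exact (hper.int_mul p) θ
    rw [hperiod] at h1
    have h2 : ∑ k ∈ Finset.range q,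
        (ε * F (ψ (θ + 2*π*α*k)) (θ + 2*π*α*k) + lam) = 0 := by linarith
    have h3 : ∀ k : ℕ, Real.sin ((q:ℝ) * (θ + 2*π*α*k)) = Real.sin ((q:ℝ)*θ) := by
      intro k
      have harg : (q:ℝ) * (θ + 2*π*α*k) = (q:ℝ)*θ + ((p*k : ℤ):ℝ) * (2*π) := by
        rw [hα]; push_cast; field_simp
      rw [harg, Real.sin_add_int_mul_two_pi]
    have h4 : ∑ k ∈ Finset.range q,
        (ε * F (ψ (θ + 2*π*α*k)) (θ + 2*π*α*k) + lam) =
        ε * Real.sin (q*θ) *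
          (∑ k ∈ Finset.range q, (1 + Real.sin (ψ (θ + 2*π*α*k)) ^ 2)) + q*lam := by
      rw [Finset.sum_add_distrib, Finset.sum_const, Finset.card_range, Finset.mul_sum]
      congr 1
      · apply Finset.sum_congr rfl
        intro k _
        rw [hF, h3 k]; ring
      · simp [nsmul_eq_mul]
    rw [h4] at h2
    exact h2
  -- sum lower bound
  have sumlb : ∀ θ : ℝ, (q:ℝ) ≤ ∑ k ∈ Finset.range q, (1 + Real.sin (ψ (θ + 2*π*α*k)) ^ 2) := by
    intro θ
    calc (q:ℝ) = ∑ _k ∈ Finset.range q, (1:ℝ) := by simp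
    _ ≤ _ := by
        apply Finset.sum_le_sum
        intro k _
        nlinarith [sq_nonneg (Real.sin (ψ (θ + 2*π*α*k)))]
  -- evaluate at θ = π/(2q)
  have hplus := key (π/(2*q))
  have hsin1 : Real.sin ((q:ℝ) * (π/(2*q))) = 1 := by
    have : (q:ℝ) * (π/(2*q)) = π/2 := by field_simp
    rw [this, Real.sin_pi_div_two]
  rw [hsin1] at hplus
  have hminus := key (-(π/(2*q)))
  have hsin2 : Real.sin ((q:ℝ) * (-(π/(2*q)))) = -1 := by
    have : (q:ℝ) * (-(π/(2*q))) = -(π/2) := by field_simp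
    rw [this, Real.sin_neg, Real.sin_pi_div_two]
  rw [hsin2] at hminus
  have S1 := sumlb (π/(2*q))
  have S2 := sumlb (-(π/(2*q)))
  nlinarith [mul_pos hε hq0, sumlb (π/(2*q)), sumlb (-(π/(2*q)))]
end

section
/- Let α be irrational, a : 𝕋 → ℝ continuous and positive, and suppose there exists a continuous positive b : 𝕋 → ℝ with a(θ) = b(θ)/b(θ + 2πα) for all θ, and a continuous p : 𝕋 → ℝ with ∫_0^{2π} p(θ) b(θ + 2πα) dθ ≠ 0. Then there is no continuous 2π-periodic φ satisfying φ(θ + 2πα) = a(θ)φ(θ) + p(θ) for all θ. -/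
open Real intervalIntegral

/-- Obstruction to solving the linear difference equation `φ(θ+2πα) = a(θ)φ(θ) + p(θ)`
when `a` is a multiplicative coboundary and `p` has nonzero weighted average. -/
theorem no_solution_linear_difference (α : ℝ) (hα : Irrational α)
    (a b p : ℝ → ℝ)
    (ha : Continuous a) (haper : Function.Periodic a (2 * π)) (hapos : ∀ θ, 0 < a θ)
    (hb : Continuous b) (hbper : Function.Periodic b (2 * π)) (hbpos : ∀ θ, 0 < b θ)
    (hcob : ∀ θ : ℝ, a θ = b θ / b (θ + 2 * π * α))
    (hp : Continuous p) (hpper : Function.Periodic p (2 * π))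
    (hint : (∫ θ in (0 : ℝ)..(2 * π), p θ * b (θ + 2 * π * α)) ≠ 0) :
    ¬ ∃ φ : ℝ → ℝ, Continuous φ ∧ Function.Periodic φ (2 * π) ∧
      ∀ θ : ℝ, φ (θ + 2 * π * α) = a θ * φ θ + p θ := by
  rintro ⟨φ, hφc, hφper, hφeq⟩
  set c := 2 * π * α with hc
  set ψ := fun θ => b θ * φ θ with hψdef
  have hψc : Continuous ψ := hb.mul hφc
  have hψper : Function.Periodic ψ (2 * π) := fun x => by
    simp [ψ, hbper x, hφper x]
  have key : ∀ θ, ψ (θ + c) = ψ θ + p θ * b (θ + c) := by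
    intro θ
    have hbne : b (θ + c) ≠ 0 := (hbpos _).ne'
    have := hφeq θ
    rw [hcob θ] at this
    simp only [ψ]
    rw [this]
    field_simp
  have hint1 : IntervalIntegrable (fun θ => ψ (θ + c)) MeasureTheory.volume 0 (2 * π) :=
    (hψc.comp (continuous_id.add continuous_const)).intervalIntegrable _ _
  have hint2 : IntervalIntegrable ψ MeasureTheory.volume 0 (2 * π) :=
    hψc.intervalIntegrable _ _
  have hint3 : IntervalIntegrable (fun θ => p θ * b (θ + c)) MeasureTheory.volume 0 (2 * π) :=
    (hp.mul (hb.comp (continuous_id.add continuous_const))).intervalIntegrable _ _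
  have heq : (∫ θ in (0:ℝ)..(2 * π), ψ (θ + c)) =
      (∫ θ in (0:ℝ)..(2 * π), ψ θ) + ∫ θ in (0:ℝ)..(2 * π), p θ * b (θ + c) := by
    rw [← intervalIntegral.integral_add hint2 hint3]
    exact intervalIntegral.integral_congr fun θ _ => key θ
  have hshift : (∫ θ in (0:ℝ)..(2 * π), ψ (θ + c)) = ∫ θ in (0:ℝ)..(2 * π), ψ θ := by
    rw [intervalIntegral.integral_comp_add_right ψ c]
    have := hψper.intervalIntegral_add_eq c 0
    simpa [add_comm] using this
  rw [hshift] at heq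
  exact hint (by linarith [heq])
end

section
/- Let a : 𝕋 → ℝ be continuous and α of constant type, and suppose log a ∈ H²(𝕋) (a is positive). Then there exists K > 0 such that for all n ≥ 1 and all θ, ∏_{k=0}^{n−1} a(θ + 2πkα) ≤ K e^{n χ}, where χ = (1/2π)∫_0^{2π} log a. -/
open Real Finset

lemma birkhoff_aux_geom_bound (α δ : ℝ) (hδ : 0 < δ)
    (hα : ∀ p : ℤ, ∀ q : ℕ, 1 ≤ q → |α - (p : ℝ) / (q : ℝ)| ≥ δ / (q : ℝ) ^ 2)
    (m : ℤ) (hm : m ≠ 0) (n : ℕ) :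
    ‖∑ k ∈ Finset.range n, Complex.exp (((2 * π * α * (m : ℝ) : ℝ) : ℂ) * Complex.I) ^ k‖
      ≤ |(m : ℝ)| / (2 * δ) := by
  have hpi : (0:ℝ) < π := Real.pi_pos
  set y : ℝ := 2 * π * α * (m : ℝ) with hy
  have hm1 : (1:ℝ) ≤ |(m:ℝ)| := by
    have := Int.one_le_abs hm
    calc (1:ℝ) = ((1:ℤ):ℝ) := by norm_num
    _ ≤ ((|m|:ℤ):ℝ) := by exact_mod_cast this
    _ = |(m:ℝ)| := by push_cast; ring
  have hmpos : (0:ℝ) < |(m:ℝ)| := by linarith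
  set p : ℤ := round ((m:ℝ) * α) with hp
  -- diophantine lower bound
  have hfar : δ / |(m:ℝ)| ≤ |(m:ℝ) * α - (p:ℝ)| := by
    have hq : 1 ≤ m.natAbs := Int.natAbs_pos.mpr hm
    have hcast : ((m.natAbs : ℕ) : ℝ) = |(m:ℝ)| := by
      rw [Nat.cast_natAbs]; push_cast; ring
    set p' : ℤ := if 0 ≤ m then p else -p with hp'
    have h1 := hα p' m.natAbs hq
    rw [hcast] at h1
    have keyeq : (m:ℝ) * α - (p:ℝ) = (m:ℝ) * (α - (p':ℝ) / |(m:ℝ)|) := by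
      rcases hm.lt_or_gt with hneg | hpos
      · have hmr : (m:ℝ) < 0 := by exact_mod_cast hneg
        rw [hp', if_neg (not_le.mpr hneg), abs_of_neg hmr]
        push_cast
        field_simp
      · have hmr : (0:ℝ) < (m:ℝ) := by exact_mod_cast hpos
        rw [hp', if_pos hpos.le, abs_of_pos hmr]
        push_cast
        field_simp
    have keyabs : |(m:ℝ) * α - (p:ℝ)| = |(m:ℝ)| * abs (α - (p':ℝ) / |(m:ℝ)|) := by
      rw [keyeq, abs_mul]
    have h3 : |(m:ℝ)| * (δ / |(m:ℝ)|^2) = δ / |(m:ℝ)| := by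
      field_simp
    rw [keyabs, ← h3]
    exact mul_le_mul_of_nonneg_left h1 hmpos.le
  have hhalf : |(m:ℝ) * α - (p:ℝ)| ≤ 1/2 := abs_sub_round _
  -- sine lower bound
  have hsin : 2 * δ / |(m:ℝ)| ≤ |Real.sin (y/2)| := by
    have hy2 : y / 2 = π * ((m:ℝ)*α - (p:ℝ)) + (p:ℤ) * π := by rw [hy]; push_cast; ring
    have habs1 : |((-1:ℝ))^(p:ℤ)| = 1 := by
      rcases Int.even_or_odd p with he | ho
      · rw [he.neg_one_zpow]; simp
      · rw [Odd.neg_one_zpow ho]; simp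
    rw [hy2, Real.sin_add_int_mul_pi, abs_mul, habs1, one_mul]
    have h1 : |π * ((m:ℝ)*α - (p:ℝ))| ≤ π/2 := by
      rw [abs_mul, abs_of_pos hpi]
      nlinarith [abs_nonneg ((m:ℝ)*α - (p:ℝ))]
    have h2 := Real.mul_abs_le_abs_sin h1
    have h3 : 2/π * |π * ((m:ℝ)*α - (p:ℝ))| = 2 * |(m:ℝ)*α - (p:ℝ)| := by
      rw [abs_mul, abs_of_pos hpi]; field_simp
    rw [h3] at h2
    have h4 : 2 * δ / |(m:ℝ)| ≤ 2 * |(m:ℝ)*α - (p:ℝ)| := by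
      rw [mul_div_assoc]; linarith [hfar]
    linarith
  have hδm : (0:ℝ) < 2 * δ / |(m:ℝ)| := by positivity
  set z : ℂ := Complex.exp ((y:ℝ) * Complex.I) with hz
  have hz1 : z ≠ 1 := by
    intro h
    rw [hz, Complex.exp_eq_one_iff] at h
    obtain ⟨j, hj⟩ := h
    have hy' : (y:ℂ) = (j:ℂ) * (2 * π) := by
      have h' : (y:ℂ) * Complex.I = ((j:ℂ) * (2*π)) * Complex.I := by rw [hj]; ring
      exact mul_right_cancel₀ Complex.I_ne_zero h'
    have hyr : y = (j:ℤ) * (2*π) := by exact_mod_cast hy'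
    have hs0 : Real.sin (y/2) = 0 := by
      have hh : y / 2 = (j:ℤ) * π := by rw [hyr]; ring
      rw [hh, Real.sin_int_mul_pi]
    rw [hs0] at hsin
    simp at hsin
    linarith
  have hzre : (z - 1).re = Real.cos y - 1 := by
    rw [hz, Complex.exp_mul_I]; simp [Complex.cos_ofReal_re, Complex.sin_ofReal_re]
  have hzim : (z - 1).im = Real.sin y := by
    rw [hz, Complex.exp_mul_I]; simp [Complex.cos_ofReal_im, Complex.sin_ofReal_re]
  have hnormsq : ‖z - 1‖^2 = 4 * Real.sin (y/2)^2 := by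
    calc ‖z - 1‖^2 = (z-1).re^2 + (z-1).im^2 := by
          rw [Complex.sq_norm, Complex.normSq_apply]; ring
    _ = (Real.cos y - 1)^2 + Real.sin y^2 := by rw [hzre, hzim]
    _ = 2 - 2 * Real.cos y := by rw [Real.sin_sq]; ring
    _ = 4 * Real.sin (y/2)^2 := by
          rw [Real.sin_sq_eq_half_sub, show 2*(y/2) = y by ring]; ring
  have hz1' : 4 * δ / |(m:ℝ)| ≤ ‖z - 1‖ := by
    have h6 : (4*δ/|(m:ℝ)|)^2 ≤ ‖z-1‖^2 := by
      rw [hnormsq]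
      have : (4*δ/|(m:ℝ)|)^2 = 4 * (2*δ/|(m:ℝ)|)^2 := by ring
      rw [this]
      have h7 : (2*δ/|(m:ℝ)|)^2 ≤ |Real.sin (y/2)|^2 := by
        nlinarith [hsin, hδm.le]
      rw [sq_abs] at h7
      linarith
    nlinarith [h6, norm_nonneg (z-1), hδm]
  rw [geom_sum_eq hz1, norm_div]
  have hnum : ‖z^n - 1‖ ≤ 2 := by
    calc ‖z^n - 1‖ ≤ ‖z^n‖ + ‖(1:ℂ)‖ := norm_sub_le _ _
    _ = 1 + 1 := by
        rw [norm_pow, hz, Complex.norm_exp_ofReal_mul_I, one_pow, norm_one]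
    _ = 2 := by norm_num
  calc ‖z^n - 1‖ / ‖z - 1‖ ≤ 2 / (4*δ/|(m:ℝ)|) := by
        apply div_le_div₀ (by norm_num) hnum (by positivity) hz1'
  _ = |(m:ℝ)| / (2*δ) := by field_simp; ring

/-- For `a` positive with `log a ∈ H²(𝕋)` and α of constant type, the Birkhoff
products of `a` are bounded by `K e^{nχ}` uniformly in θ. -/
theorem birkhoff_product_bound (α δ : ℝ) (hδ : 0 < δ)
    (hα : ∀ p : ℤ, ∀ q : ℕ, 1 ≤ q → |α - (p : ℝ) / (q : ℝ)| ≥ δ / (q : ℝ) ^ 2)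
    (a : ℝ → ℝ) (ha : Continuous a) (haper : Function.Periodic a (2 * π))
    (hapos : ∀ θ, 0 < a θ)
    (c : ℤ → ℂ)
    (hH2 : Summable (fun m : ℤ => |(m : ℝ)| ^ 4 * ‖c m‖ ^ 2))
    (hrep : ∀ θ : ℝ,
      (Real.log (a θ) : ℂ) = ∑' m : ℤ, c m * Complex.exp ((m : ℂ) * θ * Complex.I))
    (χ : ℝ) (hχ : χ = (1 / (2 * π)) * ∫ θ in (0 : ℝ)..(2 * π), Real.log (a θ)) :
    ∃ K : ℝ, 0 < K ∧ ∀ n : ℕ, 1 ≤ n → ∀ θ : ℝ,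
      ∏ k ∈ Finset.range n, a (θ + 2 * π * k * α) ≤ K * Real.exp (n * χ) := by
  have hpi : (0:ℝ) < π := Real.pi_pos
  set g : ℝ → ℝ := fun θ => Real.log (a θ) with hgdef
  have hgc : Continuous g := ha.log (fun θ => (hapos θ).ne')
  have hgper : Function.Periodic g (2 * π) := fun θ => by
    simp only [hgdef, haper θ]
  -- Summability facts
  have habs1 : ∀ m : ℤ, m ≠ 0 → (1:ℝ) ≤ |(m:ℝ)| := by
    intro m hm
    have := Int.one_le_abs hm
    calc (1:ℝ) = ((1:ℤ):ℝ) := by norm_num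
    _ ≤ ((|m|:ℤ):ℝ) := by exact_mod_cast this
    _ = |(m:ℝ)| := by push_cast; ring
  have hsum1 : Summable (fun m : ℤ => ‖c m‖ * |(m:ℝ)|) := by
    have h2 : Summable (fun m : ℤ => 1 / (m:ℝ)^2) :=
      summable_one_div_int_pow.mpr (by norm_num)
    refine Summable.of_nonneg_of_le (fun m => by positivity) (fun m => ?_)
      ((hH2.add h2).div_const 2)
    rcases eq_or_ne m 0 with rfl | hm
    · simp
    · have h1 : (1:ℝ) ≤ |(m:ℝ)| := habs1 m hm
      have hne : |(m:ℝ)| ≠ 0 := by positivity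
      have hrw : 1 / (m:ℝ)^2 = (1/|(m:ℝ)|)^2 := by
        rw [div_pow, one_pow, sq_abs]
      rw [hrw]
      have htu : |(m:ℝ)| * (1/|(m:ℝ)|) = 1 := mul_one_div_cancel hne
      nlinarith [sq_nonneg (|(m:ℝ)|^2 * ‖c m‖ - 1/|(m:ℝ)|), norm_nonneg (c m),
        mul_nonneg (norm_nonneg (c m)) (abs_nonneg ((m:ℝ)))]
  have hsum0 : Summable (fun m : ℤ => ‖c m‖) := by
    have hfin : Summable (fun m : ℤ => if m = 0 then ‖c 0‖ else 0) := by
      apply summable_of_ne_finset_zero (s := {(0:ℤ)})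
      intro m hm
      simp only [Finset.mem_singleton] at hm
      simp [hm]
    refine Summable.of_nonneg_of_le (fun m => norm_nonneg _) (fun m => ?_) (hsum1.add hfin)
    rcases eq_or_ne m 0 with rfl | hm
    · simp
    · have h1 : (1:ℝ) ≤ |(m:ℝ)| := habs1 m hm
      simp only [if_neg hm, add_zero]
      nlinarith [norm_nonneg (c m)]
  -- norm of unit exponentials
  have hexp1 : ∀ (m : ℤ) (x : ℝ), ‖Complex.exp ((m:ℂ) * x * Complex.I)‖ = 1 := by
    intro m x
    rw [Complex.norm_exp]
    simp
  have hFsum : ∀ x : ℝ, Summable (fun m : ℤ => c m * Complex.exp ((m:ℂ) * x * Complex.I)) := by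
    intro x
    apply Summable.of_norm
    refine hsum0.congr fun m => ?_
    rw [norm_mul, hexp1, mul_one]
  -- the remainder bound
  set B : ℝ := ∑' m : ℤ, ‖c m‖ * |(m:ℝ)| / (2*δ) with hB
  have hBsum : Summable (fun m : ℤ => ‖c m‖ * |(m:ℝ)| / (2*δ)) := hsum1.div_const _
  have hBnonneg : 0 ≤ B := tsum_nonneg (fun m => by positivity)
  -- main pointwise estimate
  have habs : ∀ (n : ℕ) (θ : ℝ),
      |(∑ k ∈ Finset.range n, g (θ + 2*π*k*α)) - n * (c 0).re| ≤ B := by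
    intro n θ
    set T : ℤ → ℂ := fun m => c m * Complex.exp ((m:ℂ) * θ * Complex.I) *
      (∑ k ∈ Finset.range n, Complex.exp (((2 * π * α * (m:ℝ) : ℝ) : ℂ) * Complex.I) ^ k)
      with hT
    have hDn : ∀ m : ℤ, ‖∑ k ∈ Finset.range n,
        Complex.exp (((2 * π * α * (m:ℝ) : ℝ) : ℂ) * Complex.I) ^ k‖ ≤ n := by
      intro m
      calc ‖∑ k ∈ Finset.range n, Complex.exp (((2 * π * α * (m:ℝ) : ℝ) : ℂ) * Complex.I) ^ k‖
          ≤ ∑ k ∈ Finset.range n, ‖Complex.exp (((2 * π * α * (m:ℝ) : ℝ) : ℂ) * Complex.I) ^ k‖ :=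
            norm_sum_le _ _
      _ = ∑ k ∈ Finset.range n, 1 := by
            refine Finset.sum_congr rfl fun k _ => ?_
            rw [norm_pow, Complex.norm_exp_ofReal_mul_I, one_pow]
      _ = n := by simp
    have hTsum : Summable T := by
      apply Summable.of_norm
      refine Summable.of_nonneg_of_le (fun m => norm_nonneg _) (fun m => ?_) (hsum0.mul_right (n:ℝ))
      rw [hT]
      simp only []
      rw [norm_mul, norm_mul, hexp1, mul_one]
      exact mul_le_mul_of_nonneg_left (hDn m) (norm_nonneg _)
    have hkey : ∀ (m : ℤ) (k : ℕ),
        c m * Complex.exp ((m:ℂ) * ((θ + 2*π*(k:ℝ)*α : ℝ) : ℂ) * Complex.I)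
        = c m * Complex.exp ((m:ℂ) * θ * Complex.I) *
          Complex.exp (((2 * π * α * (m:ℝ) : ℝ) : ℂ) * Complex.I) ^ k := by
      intro m k
      have h : Complex.exp ((m:ℂ) * ((θ + 2*π*(k:ℝ)*α : ℝ) : ℂ) * Complex.I)
          = Complex.exp ((m:ℂ) * θ * Complex.I) *
            Complex.exp (((2 * π * α * (m:ℝ) : ℝ) : ℂ) * Complex.I) ^ k := by
        rw [← Complex.exp_nat_mul, ← Complex.exp_add]
        congr 1
        push_cast
        ring
      rw [h]; ring
    have hSC : ((∑ k ∈ Finset.range n, g (θ + 2*π*k*α) : ℝ) : ℂ) = ∑' m : ℤ, T m := by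
      rw [Complex.ofReal_sum]
      calc (∑ k ∈ Finset.range n, ((g (θ + 2*π*(k:ℝ)*α) : ℝ) : ℂ))
          = ∑ k ∈ Finset.range n, ∑' m : ℤ, c m *
              Complex.exp ((m:ℂ) * ((θ + 2*π*(k:ℝ)*α : ℝ) : ℂ) * Complex.I) := by
            refine Finset.sum_congr rfl fun k _ => ?_
            exact hrep (θ + 2*π*(k:ℝ)*α)
      _ = ∑' m : ℤ, ∑ k ∈ Finset.range n, c m *
              Complex.exp ((m:ℂ) * ((θ + 2*π*(k:ℝ)*α : ℝ) : ℂ) * Complex.I) :=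
            (Summable.tsum_finsetSum (s := Finset.range n)
              (f := fun (k : ℕ) (m : ℤ) => c m *
                Complex.exp ((m:ℂ) * ((θ + 2*π*(k:ℝ)*α : ℝ) : ℂ) * Complex.I))
              (fun k _ => hFsum (θ + 2*π*(k:ℝ)*α))).symm
      _ = ∑' m : ℤ, T m := by
            refine tsum_congr fun m => ?_
            rw [hT]
            simp only []
            rw [Finset.mul_sum]
            exact Finset.sum_congr rfl fun k _ => hkey m k
    have hsplit := Summable.tsum_eq_add_tsum_ite hTsum 0
    have hT0 : T 0 = (n : ℂ) * c 0 := by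
      rw [hT]
      simp [mul_comm]
    set R : ℂ := ∑' m : ℤ, if m = 0 then 0 else T m with hR
    have hRle : ‖R‖ ≤ B := by
      rw [hR, hB]
      apply tsum_of_norm_bounded hBsum.hasSum
      intro m
      rcases eq_or_ne m 0 with rfl | hm
      · simp only [eq_self_iff_true, if_true, norm_zero]
        show (0:ℝ) ≤ ‖c 0‖ * |((0:ℤ):ℝ)| / (2*δ)
        positivity
      · rw [if_neg hm, hT]
        simp only []
        rw [norm_mul, norm_mul, hexp1, mul_one, mul_div_assoc]
        exact mul_le_mul_of_nonneg_left
          (birkhoff_aux_geom_bound α δ hδ hα m hm n) (norm_nonneg _)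
    have hfinal : ((∑ k ∈ Finset.range n, g (θ + 2*π*k*α) : ℝ) : ℂ) = (n : ℂ) * c 0 + R := by
      rw [hSC, hsplit, hT0, hR]
    have hre := congrArg Complex.re hfinal
    simp only [Complex.ofReal_re, Complex.add_re, Complex.mul_re, Complex.natCast_re,
      Complex.natCast_im, Complex.ofReal_im, zero_mul, sub_zero] at hre
    rw [hre]
    have : (n:ℝ) * (c 0).re + R.re - (n:ℝ) * (c 0).re = R.re := by ring
    rw [this]
    exact (Complex.abs_re_le_norm R).trans hRle
  -- integral identity
  have hScont : ∀ n : ℕ, Continuous (fun θ : ℝ => ∑ k ∈ Finset.range n, g (θ + 2*π*k*α)) := by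
    intro n
    apply continuous_finset_sum
    intro k _
    exact hgc.comp (continuous_id.add continuous_const)
  have hint : ∀ n : ℕ, ∫ θ in (0:ℝ)..(2*π), (∑ k ∈ Finset.range n, g (θ + 2*π*k*α)) =
      n * (2 * π * χ) := by
    intro n
    have hik : ∀ k ∈ Finset.range n, IntervalIntegrable
        (fun θ : ℝ => g (θ + 2*π*(k:ℝ)*α)) MeasureTheory.volume 0 (2*π) := by
      intro k _
      apply Continuous.intervalIntegrable
      exact hgc.comp (continuous_id.add continuous_const)
    rw [intervalIntegral.integral_finset_sum hik]
    have h1 : ∀ k : ℕ, (∫ θ in (0:ℝ)..(2*π), g (θ + 2*π*k*α)) = ∫ θ in (0:ℝ)..(2*π), g θ := by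
      intro k
      rw [intervalIntegral.integral_comp_add_right]
      have h2 := hgper.intervalIntegral_add_eq (2*π*k*α) 0
      rw [zero_add] at h2
      rw [show (0:ℝ) + 2*π*k*α = 2*π*k*α by ring, show 2*π + 2*π*k*α = 2*π*k*α + 2*π by ring]
      exact h2
    rw [Finset.sum_congr rfl (fun k _ => h1 k), Finset.sum_const, Finset.card_range,
      nsmul_eq_mul]
    congr 1
    rw [hχ]
    field_simp
  -- conclude (c 0).re ≤ χ + B/n
  have hc0 : ∀ n : ℕ, 1 ≤ n → (n:ℝ) * (c 0).re ≤ n * χ + B := by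
    intro n hn
    have hconst : IntervalIntegrable (fun _ : ℝ => (n:ℝ) * (c 0).re) MeasureTheory.volume 0 (2*π) :=
      intervalIntegrable_const
    have hSint : IntervalIntegrable (fun θ : ℝ => ∑ k ∈ Finset.range n, g (θ + 2*π*k*α))
        MeasureTheory.volume 0 (2*π) := (hScont n).intervalIntegrable _ _
    have hbound := intervalIntegral.norm_integral_le_of_norm_le_const
      (C := B) (f := fun θ : ℝ => (∑ k ∈ Finset.range n, g (θ + 2*π*k*α)) - n * (c 0).re)
      (a := 0) (b := 2*π) (fun x _ => by
        rw [Real.norm_eq_abs]; exact habs n x)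
    rw [intervalIntegral.integral_sub hSint hconst, hint n,
      intervalIntegral.integral_const, smul_eq_mul] at hbound
    rw [Real.norm_eq_abs] at hbound
    have h2π : |2*π - 0| = 2*π := by
      rw [sub_zero, abs_of_pos (by positivity)]
    rw [h2π] at hbound
    have h3 := (abs_le.mp hbound).1
    nlinarith [h3, hpi]
  -- final bound
  refine ⟨Real.exp (2*B), Real.exp_pos _, fun n hn θ => ?_⟩
  have hprod : ∏ k ∈ Finset.range n, a (θ + 2*π*k*α) =
      Real.exp (∑ k ∈ Finset.range n, g (θ + 2*π*k*α)) := by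
    rw [Real.exp_sum]
    refine Finset.prod_congr rfl fun k _ => ?_
    rw [hgdef]
    exact (Real.exp_log (hapos _)).symm
  have hSle : (∑ k ∈ Finset.range n, g (θ + 2*π*k*α)) ≤ n * χ + 2*B := by
    have h1 := (abs_le.mp (habs n θ)).2
    have h2 := hc0 n hn
    linarith
  rw [hprod]
  calc Real.exp (∑ k ∈ Finset.range n, g (θ + 2*π*k*α)) ≤ Real.exp (n * χ + 2*B) :=
        Real.exp_le_exp.mpr hSle
  _ = Real.exp (2*B) * Real.exp (n * χ) := by rw [← Real.exp_add]; ring_nf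
end
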